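/- For F : ℝⁿ → ℝ differentiable with L-Lipschitz gradient ∇F, h : ℝᵈ → ℝ, matrices A ∈ ℝ^{p×n}, B ∈ ℝ^{p×d}, c ∈ ℝᵖ and ρ > 0, let L_ρ(x,y,λ) = F(x) + h(y) − ⟨λ, Ax + By − c⟩ + (ρ/2)‖Ax + By − c‖². Let Q ∈ ℝ^{n×n} be symmetric with φ_min‖w‖² ≤ ⟨w, Qw⟩ for all w ∈ ℝⁿ (φ_min > 0), and let σ_A ≥ 0 satisfy σ_A‖w‖² ≤ ‖Aw‖² for all w ∈ ℝⁿ. Fix y ∈ ℝᵈ, λ ∈ ℝᵖ, η > 0, ν > 0, and suppose x, x₊ ∈ ℝⁿ and v ∈ ℝⁿ satisfy the stationarity condition 0 = v − Aᵀλ + ρAᵀ(Ax₊ + By − c) − ηQ(x − x₊). Then L_ρ(x₊, y, λ) ≤ L_ρ(x, y, λ) + (ν/2)‖v − ∇F(x)‖² − (ηφ_min + σ_Aρ/2 − L/2 − 1/(2ν))·‖x₊ − x‖². -/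

import Mathlib

open Matrix
open scoped RealInnerProductSpace

/-- The action of a real matrix on Euclidean space. -/
noncomputable def mvec {m n : ℕ} (A : Matrix (Fin m) (Fin n) ℝ)
    (x : EuclideanSpace ℝ (Fin n)) : EuclideanSpace ℝ (Fin m) :=
  (WithLp.equiv 2 (Fin m → ℝ)).symm (A.mulVec ((WithLp.equiv 2 (Fin n → ℝ)) x))

/-- The augmented Lagrangian `L_ρ(x, y, λ)` of the problem
`min F(x) + h(y)  s.t.  Ax + By = c`. -/
noncomputable def augLag {n d p : ℕ} (F : EuclideanSpace ℝ (Fin n) → ℝ)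
    (h : EuclideanSpace ℝ (Fin d) → ℝ) (A : Matrix (Fin p) (Fin n) ℝ)
    (B : Matrix (Fin p) (Fin d) ℝ) (c : EuclideanSpace ℝ (Fin p)) (ρ : ℝ)
    (x : EuclideanSpace ℝ (Fin n)) (y : EuclideanSpace ℝ (Fin d))
    (lam : EuclideanSpace ℝ (Fin p)) : ℝ :=
  F x + h y - ⟪lam, mvec A x + mvec B y - c⟫ + (ρ / 2) * ‖mvec A x + mvec B y - c‖ ^ 2

lemma mvec_sub {m n : ℕ} (A : Matrix (Fin m) (Fin n) ℝ) (a b : EuclideanSpace ℝ (Fin n)) :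
    mvec A (a - b) = mvec A a - mvec A b := by
  ext i
  simp [mvec, Matrix.mulVec_sub]

lemma inner_mvec {m n : ℕ} (A : Matrix (Fin m) (Fin n) ℝ) (u : EuclideanSpace ℝ (Fin m))
    (w : EuclideanSpace ℝ (Fin n)) : ⟪u, mvec A w⟫ = ⟪mvec Aᵀ u, w⟫ := by
  simp only [mvec, PiLp.inner_apply, RCLike.inner_apply, conj_trivial,
    Matrix.mulVec_transpose, WithLp.equiv_symm_apply, WithLp.equiv_apply]
  simpa [dotProduct, mul_comm] using Matrix.dotProduct_mulVec u.ofLp A w.ofLp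

lemma descent_lemma {E : Type*} [NormedAddCommGroup E] [InnerProductSpace ℝ E] [CompleteSpace E]
    (F : E → ℝ) (gradF : E → E) (hgrad : ∀ z, HasGradientAt F (gradF z) z)
    (L : ℝ) (hL : 0 ≤ L) (hlip : ∀ z z', ‖gradF z - gradF z'‖ ≤ L * ‖z - z'‖)
    (x s : E) : F (x + s) ≤ F x + ⟪gradF x, s⟫ + L / 2 * ‖s‖ ^ 2 := by
  have hcont : Continuous gradF :=
    (LipschitzWith.of_dist_le_mul (K := ⟨L, hL⟩) (fun z z' => by
      rw [dist_eq_norm, dist_eq_norm]; exact hlip z z')).continuous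
  set g : ℝ → ℝ := fun t => F (x + t • s) with hg
  have hpath : ∀ t : ℝ, HasDerivAt (fun t : ℝ => x + t • s) s t := fun t => by
    simpa using ((hasDerivAt_id t).smul_const s).const_add x
  have hg' : ∀ t : ℝ, HasDerivAt g (⟪gradF (x + t • s), s⟫) t := fun t => by
    have h1 := ((hgrad (x + t • s)).hasFDerivAt).comp_hasDerivAt t (hpath t)
    simp only [InnerProductSpace.toDual_apply_apply] at h1; exact h1
  have hderivcont : Continuous fun t : ℝ => ⟪gradF (x + t • s), s⟫ :=
    (hcont.comp (continuous_const.add (continuous_id.smul continuous_const))).inner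
      continuous_const
  have hint : IntervalIntegrable (fun t : ℝ => ⟪gradF (x + t • s), s⟫)
      MeasureTheory.volume 0 1 := hderivcont.intervalIntegrable 0 1
  have hftc : ∫ t in (0:ℝ)..1, ⟪gradF (x + t • s), s⟫ = g 1 - g 0 :=
    intervalIntegral.integral_eq_sub_of_hasDerivAt (fun t _ => hg' t) hint
  have hbound : ∀ t ∈ Set.Icc (0:ℝ) 1,
      ⟪gradF (x + t • s), s⟫ ≤ ⟪gradF x, s⟫ + L * ‖s‖ ^ 2 * t := by
    intro t ht
    have h1 : ⟪gradF (x + t • s) - gradF x, s⟫ ≤ ‖gradF (x + t • s) - gradF x‖ * ‖s‖ :=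
      real_inner_le_norm _ _
    have h2 : ‖gradF (x + t • s) - gradF x‖ ≤ L * (t * ‖s‖) := by
      have := hlip (x + t • s) x
      simpa [norm_smul, abs_of_nonneg ht.1] using this
    have h3 : ⟪gradF (x + t • s) - gradF x, s⟫ = ⟪gradF (x + t • s), s⟫ - ⟪gradF x, s⟫ := by
      rw [inner_sub_left]
    nlinarith [norm_nonneg s]
  have hmono : ∫ t in (0:ℝ)..1, ⟪gradF (x + t • s), s⟫ ≤
      ∫ t in (0:ℝ)..1, (⟪gradF x, s⟫ + L * ‖s‖ ^ 2 * t) := by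
    apply intervalIntegral.integral_mono_on (by norm_num) hint
    · exact (continuous_const.add (continuous_const.mul continuous_id)).intervalIntegrable 0 1
    · exact hbound
  have hrhs : ∫ t in (0:ℝ)..1, (⟪gradF x, s⟫ + L * ‖s‖ ^ 2 * t) =
      ⟪gradF x, s⟫ + L / 2 * ‖s‖ ^ 2 := by
    have : (fun t : ℝ => ⟪gradF x, s⟫ + L * ‖s‖ ^ 2 * t) =
        (fun t : ℝ => ⟪gradF x, s⟫ + L * ‖s‖ ^ 2 * id t) := rfl
    rw [this, intervalIntegral.integral_add (f := fun _ => ⟪gradF x, s⟫) (g := fun t => L * ‖s‖ ^ 2 * id t) (intervalIntegrable_const)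
      ((continuous_const.mul continuous_id).intervalIntegrable 0 1),
      intervalIntegral.integral_const_mul]
    simp only [id_eq, integral_id, intervalIntegral.integral_const, smul_eq_mul]
    ring
  have : g 1 - g 0 ≤ ⟪gradF x, s⟫ + L / 2 * ‖s‖ ^ 2 := by
    rw [← hftc]; rw [hrhs] at hmono; exact hmono
  simp only [hg, one_smul, zero_smul, add_zero] at this
  linarith

theorem stmt_5 {n d p : ℕ} (F : EuclideanSpace ℝ (Fin n) → ℝ)
    (gradF : EuclideanSpace ℝ (Fin n) → EuclideanSpace ℝ (Fin n))
    (hgrad : ∀ z, HasGradientAt F (gradF z) z)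
    (L : ℝ) (hL : 0 ≤ L)
    (hlip : ∀ z z', ‖gradF z - gradF z'‖ ≤ L * ‖z - z'‖)
    (h : EuclideanSpace ℝ (Fin d) → ℝ)
    (A : Matrix (Fin p) (Fin n) ℝ) (B : Matrix (Fin p) (Fin d) ℝ)
    (c : EuclideanSpace ℝ (Fin p)) (ρ : ℝ) (hρ : 0 < ρ)
    (Q : Matrix (Fin n) (Fin n) ℝ) (hQsymm : Q.IsSymm)
    (φmin : ℝ) (hφmin : 0 < φmin)
    (hQ : ∀ w : EuclideanSpace ℝ (Fin n), φmin * ‖w‖ ^ 2 ≤ ⟪w, mvec Q w⟫)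
    (σA : ℝ) (hσA : 0 ≤ σA)
    (hA : ∀ w : EuclideanSpace ℝ (Fin n), σA * ‖w‖ ^ 2 ≤ ‖mvec A w‖ ^ 2)
    (y : EuclideanSpace ℝ (Fin d)) (lam : EuclideanSpace ℝ (Fin p))
    (η ν : ℝ) (hη : 0 < η) (hν : 0 < ν)
    (x xp v : EuclideanSpace ℝ (Fin n))
    (hstat : (0 : EuclideanSpace ℝ (Fin n)) =
      v - mvec Aᵀ lam + ρ • mvec Aᵀ (mvec A xp + mvec B y - c) - η • mvec Q (x - xp)) :
    augLag F h A B c ρ xp y lam ≤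
      augLag F h A B c ρ x y lam + (ν / 2) * ‖v - gradF x‖ ^ 2 -
        (η * φmin + σA * ρ / 2 - L / 2 - 1 / (2 * ν)) * ‖xp - x‖ ^ 2 := by
  simp only [augLag]
  set s : EuclideanSpace ℝ (Fin n) := xp - x with hs
  set rp : EuclideanSpace ℝ (Fin p) := mvec A xp + mvec B y - c with hrp
  set r : EuclideanSpace ℝ (Fin p) := mvec A x + mvec B y - c with hr
  have hrrel : r = rp - mvec A s := by
    rw [hrp, hr, hs, mvec_sub]; abel
  have hQflip : mvec Q (x - xp) = - mvec Q s := by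
    rw [hs, mvec_sub, mvec_sub]; abel
  have hxps : xp = x + s := by rw [hs]; abel
  clear_value s rp r
  -- descent
  have hdesc : F xp ≤ F x + ⟪gradF x, s⟫ + L / 2 * ‖s‖ ^ 2 := by
    rw [hxps]; exact descent_lemma F gradF hgrad L hL hlip x s
  have hnorm : ρ / 2 * ‖r‖ ^ 2 =
      ρ / 2 * ‖rp‖ ^ 2 - ρ * ⟪rp, mvec A s⟫ + ρ / 2 * ‖mvec A s‖ ^ 2 := by
    rw [hrrel, norm_sub_sq_real]; ring
  -- stationarity
  have hstat' : mvec Aᵀ lam = v + ρ • mvec Aᵀ rp + η • mvec Q s := by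
    rw [hQflip, smul_neg, sub_neg_eq_add] at hstat
    have h1 : (v + ρ • mvec Aᵀ rp + η • mvec Q s) - mvec Aᵀ lam = 0 := by
      rw [show (v + ρ • mvec Aᵀ rp + η • mvec Q s) - mvec Aᵀ lam
          = v - mvec Aᵀ lam + ρ • mvec Aᵀ rp + η • mvec Q s by abel, ← hstat]
    exact (eq_of_sub_eq_zero h1).symm
  have hstatinner : ⟪lam, mvec A s⟫ = ⟪v, s⟫ + ρ * ⟪rp, mvec A s⟫ + η * ⟪s, mvec Q s⟫ := by
    rw [inner_mvec A lam s, inner_mvec A rp s, hstat', inner_add_left, inner_add_left,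
      real_inner_smul_left, real_inner_smul_left, real_inner_comm s (mvec Q s)]
  have hlamdiff : ⟪lam, rp⟫ - ⟪lam, r⟫ = ⟪lam, mvec A s⟫ := by
    rw [hrrel, inner_sub_right]; ring
  -- Young inequality
  have hyoung : ⟪gradF x, s⟫ - ⟪v, s⟫ ≤ ν / 2 * ‖v - gradF x‖ ^ 2 + 1 / (2 * ν) * ‖s‖ ^ 2 := by
    have h1 : ⟪gradF x - v, s⟫ ≤ ‖gradF x - v‖ * ‖s‖ := real_inner_le_norm _ _
    rw [inner_sub_left, norm_sub_rev] at h1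
    have h2 : ‖v - gradF x‖ * ‖s‖ ≤ ν / 2 * ‖v - gradF x‖ ^ 2 + 1 / (2 * ν) * ‖s‖ ^ 2 := by
      rw [← sub_nonneg]
      have key : ν / 2 * ‖v - gradF x‖ ^ 2 + 1 / (2 * ν) * ‖s‖ ^ 2 -
          ‖v - gradF x‖ * ‖s‖ = (ν * ‖v - gradF x‖ - ‖s‖) ^ 2 / (2 * ν) := by
        field_simp; ring
      rw [key]; positivity
    linarith
  have hρAs : ρ * (σA * ‖s‖ ^ 2) ≤ ρ * ‖mvec A s‖ ^ 2 :=
    mul_le_mul_of_nonneg_left (hA s) hρ.le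
  have hηQs : η * (φmin * ‖s‖ ^ 2) ≤ η * ⟪s, mvec Q s⟫ :=
    mul_le_mul_of_nonneg_left (hQ s) hη.le
  linarith [hdesc, hnorm, hstatinner, hlamdiff, hyoung, hρAs, hηQs]
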